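/- For every ε > 0 there exists B(ε) < ∞ such that for every B > B(ε) there exists δ(ε,B) > 0 with the following property: for all sufficiently large N, ℙ( rank(X_N − X_N^B) ≥ εN ) ≤ e^{−δ(ε,B) N}, where X_N^B is the matrix with entries x_{ij} 1_{|x_{ij}| ≤ B a_N}. -/

import Mathlib

open MeasureTheory ProbabilityTheory Filter Topology Matrix
open scoped ENNReal NNReal BoundedContinuousFunction

noncomputable section

/-- The `N × N` real symmetric matrix built from the upper-triangular array
`(x i j)_{1 ≤ i ≤ j}`, evaluated at the sample point `ω`. -/
def symMat {Ω : Type} (x : ℕ → ℕ → Ω → ℝ) (ω : Ω) (N : ℕ) :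
    Matrix (Fin N) (Fin N) ℝ :=
  Matrix.of fun i j => x (min (i.1 + 1) (j.1 + 1)) (max (i.1 + 1) (j.1 + 1)) ω

/-- The eigenvalues of a real symmetric matrix (junk value `0` if not symmetric). -/
def evs {N : ℕ} (M : Matrix (Fin N) (Fin N) ℝ) : Fin N → ℝ :=
  letI := Classical.propDecidable
  if h : M.IsHermitian then h.eigenvalues else 0

/-- The tail probability `ℙ(|v| ≥ u)`. -/
def tailP {Ω : Type} [MeasureSpace Ω] (v : Ω → ℝ) (u : ℝ) : ℝ :=
  (ℙ {ω | u ≤ |v ω|}).toReal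

/-- The normalizing constant `a_N = inf {u > 0 : ℙ(|v| ≥ u) ≤ 1/N}`. -/
def aN {Ω : Type} [MeasureSpace Ω] (v : Ω → ℝ) (N : ℕ) : ℝ :=
  sInf {u : ℝ | 0 < u ∧ tailP v u ≤ 1 / N}


/-- The truncated, renormalized symmetric random matrix with entries
`a⁻¹ · x_{ij} 1_{|x_{ij}| ≤ c}`. -/
def truncMat {Ω : Type} (x : ℕ → ℕ → Ω → ℝ) (a c : ℝ) (ω : Ω) (N : ℕ) :
    Matrix (Fin N) (Fin N) ℝ :=
  Matrix.of fun i j =>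
    a⁻¹ * (if |x (min (i.1 + 1) (j.1 + 1)) (max (i.1 + 1) (j.1 + 1)) ω| ≤ c
      then x (min (i.1 + 1) (j.1 + 1)) (max (i.1 + 1) (j.1 + 1)) ω else 0)

lemma pow_le_exp_mul_factorial (m : ℕ) : (m:ℝ)^m ≤ Real.exp m * m.factorial := by
  induction m with
  | zero => simp
  | succ m ih =>
    rcases Nat.eq_zero_or_pos m with hm | hm
    · subst hm
      simpa using Real.one_le_exp (by norm_num : (0:ℝ) ≤ 1)
    have hm0 : (0:ℝ) < m := by exact_mod_cast hm
    have h1 : ((m:ℝ)+1) ≤ m * Real.exp (1/m) := by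
      have := Real.add_one_le_exp (1/(m:ℝ))
      calc ((m:ℝ)+1) = m * (1/m + 1) := by field_simp; ring
        _ ≤ m * Real.exp (1/m) := by
            exact mul_le_mul_of_nonneg_left this hm0.le
    have h2 : ((m:ℝ)+1)^m ≤ (m:ℝ)^m * Real.exp 1 := by
      calc ((m:ℝ)+1)^m ≤ (m * Real.exp (1/m))^m := by
            apply pow_le_pow_left₀ (by positivity) h1
        _ = (m:ℝ)^m * Real.exp (1/m) ^ m := by rw [mul_pow]
        _ = (m:ℝ)^m * Real.exp 1 := by
            rw [← Real.exp_nat_mul]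
            congr 1
            field_simp
    have h3 : ((m:ℝ)+1)^(m+1) = ((m:ℝ)+1) * ((m:ℝ)+1)^m := by ring
    have hfac : ((m+1:ℕ).factorial : ℝ) = ((m:ℝ)+1) * m.factorial := by
      push_cast [Nat.factorial_succ]; ring
    push_cast
    rw [h3]
    calc ((m:ℝ)+1) * ((m:ℝ)+1)^m ≤ ((m:ℝ)+1) * ((m:ℝ)^m * Real.exp 1) := by
          exact mul_le_mul_of_nonneg_left h2 (by positivity)
      _ ≤ ((m:ℝ)+1) * (Real.exp m * m.factorial * Real.exp 1) := by
          have : (0:ℝ) < Real.exp 1 := Real.exp_pos 1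
          apply mul_le_mul_of_nonneg_left _ (by positivity)
          exact mul_le_mul_of_nonneg_right ih this.le
      _ = Real.exp ((m:ℝ)+1) * (((m:ℝ)+1) * (m.factorial:ℝ)) := by
          rw [Real.exp_add]; ring
      _ = Real.exp ((m:ℝ)+1) * (((m+1:ℕ)).factorial : ℝ) := by rw [hfac]

lemma rank_le_two_mul_card {N : ℕ} (M : Matrix (Fin N) (Fin N) ℝ) (F : Finset (ℕ × ℕ))
    (hM : ∀ i j : Fin N, M i j ≠ 0 →
      (min (i.1+1) (j.1+1), max (i.1+1) (j.1+1)) ∈ F) :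
    M.rank ≤ 2 * F.card := by
  classical
  set s : Finset (Fin N) := Finset.univ.filter (fun j => Mᵀ j ≠ 0) with hs
  have h1 : M.rank ≤ s.card := by
    rw [Matrix.rank_eq_finrank_span_cols]
    have hsub : Set.range Mᵀ ⊆ insert 0 (↑(s.image Mᵀ) : Set (Fin N → ℝ)) := by
      rintro _ ⟨j, rfl⟩
      by_cases h : Mᵀ j = 0
      · rw [h]; exact Set.mem_insert _ _
      · exact Set.mem_insert_of_mem _
          (Finset.mem_coe.2 (Finset.mem_image_of_mem _ (by simp [hs, h])))
    calc Module.finrank ℝ (Submodule.span ℝ (Set.range Mᵀ))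
        ≤ Module.finrank ℝ (Submodule.span ℝ (insert 0 (↑(s.image Mᵀ) : Set (Fin N → ℝ)))) := by
          apply Submodule.finrank_mono (Submodule.span_mono hsub)
      _ = Module.finrank ℝ (Submodule.span ℝ (↑(s.image Mᵀ) : Set (Fin N → ℝ))) := by
          rw [Submodule.span_insert_zero]
      _ ≤ (s.image Mᵀ).card := finrank_span_finset_le_card _
      _ ≤ s.card := Finset.card_image_le
  have h2 : s.card ≤ 2 * F.card := by
    set g : Fin N → (ℕ × ℕ) × Bool := fun j =>
      if h : ∃ i, M i j ≠ 0 then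
        ((min (h.choose.1+1) (j.1+1), max (h.choose.1+1) (j.1+1)),
          decide (j.1+1 = min (h.choose.1+1) (j.1+1))) else ((0,0), true) with hg
    have hex : ∀ j ∈ s, ∃ i, M i j ≠ 0 := by
      intro j hj
      simp only [hs, Finset.mem_filter] at hj
      by_contra hc
      push_neg at hc
      exact hj.2 (funext fun i => hc i)
    have hmem : ∀ j ∈ s, g j ∈ F ×ˢ (Finset.univ : Finset Bool) := by
      intro j hj
      have h := hex j hj
      simp only [hg, dif_pos h]
      exact Finset.mem_product.2 ⟨hM _ _ h.choose_spec, Finset.mem_univ _⟩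
    have hinj : Set.InjOn g s := by
      intro j hj k hk hjk
      have hjex := hex j hj
      have hkex := hex k hk
      simp only [hg, dif_pos hjex, dif_pos hkex, Prod.mk.injEq] at hjk
      obtain ⟨⟨e1, e2⟩, e3⟩ := hjk
      have hmj : j.1+1 = min (hjex.choose.1+1) (j.1+1) ∨
          j.1+1 = max (hjex.choose.1+1) (j.1+1) := by
        rcases min_cases (hjex.choose.1+1) (j.1+1) with ⟨h', _⟩ | ⟨h', _⟩
        · right; omega
        · left; omega
      have hmk : k.1+1 = min (hkex.choose.1+1) (k.1+1) ∨
          k.1+1 = max (hkex.choose.1+1) (k.1+1) := by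
        rcases min_cases (hkex.choose.1+1) (k.1+1) with ⟨h', _⟩ | ⟨h', _⟩
        · right; omega
        · left; omega
      have : j.1 = k.1 := by
        rw [decide_eq_decide] at e3
        by_cases hb : j.1+1 = min (hjex.choose.1+1) (j.1+1)
        · have hb' := e3.mp hb
          omega
        · have hb' : ¬ (k.1+1 = min (hkex.choose.1+1) (k.1+1)) := fun h => hb (e3.mpr h)
          rcases hmj with h' | h'
          · exact absurd h' hb
          rcases hmk with h'' | h''
          · exact absurd h'' hb'
          omega
      exact Fin.ext this
    calc s.card ≤ (F ×ˢ (Finset.univ : Finset Bool)).card :=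
          Finset.card_le_card_of_injOn g hmem hinj
      _ = F.card * 2 := by rw [Finset.card_product]; simp
      _ = 2 * F.card := by ring
  omega

set_option maxHeartbeats 2000000 in
/-- **Lemma 2.4 (1)**: for every `ε > 0` there is `B(ε) < ∞` such that for every
`B > B(ε)` there is `δ(ε,B) > 0` with
`ℙ(rank(X_N − X_N^B) ≥ εN) ≤ e^{−δ(ε,B) N}` for all large `N`. -/
theorem rank_truncation_exponential_bound
    (α : ℝ) (hα : α ∈ Set.Ioo (0 : ℝ) 2)
    (Ω : Type) [MeasureSpace Ω] [IsProbabilityMeasure (ℙ : Measure Ω)]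
    (x : ℕ → ℕ → Ω → ℝ) (L : ℝ → ℝ)
    (hmeas : ∀ i j, Measurable (x i j))
    (hident : ∀ i j : ℕ, 1 ≤ i → i ≤ j →
      Measure.map (x i j) ℙ = Measure.map (x 1 1) ℙ)
    (hindep : iIndepFun
      (fun p : {p : ℕ × ℕ // 1 ≤ p.1 ∧ p.1 ≤ p.2} => x p.1.1 p.1.2) ℙ)
    (hL : ∀ c > (0 : ℝ), Tendsto (fun t => L (c * t) / L t) atTop (𝓝 1))
    (htail : ∀ u > (0 : ℝ), tailP (x 1 1) u = L u / u ^ α) :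
    ∀ ε > (0 : ℝ), ∃ B₀ : ℝ, ∀ B > B₀, ∃ δ > (0 : ℝ), ∃ N₀ : ℕ, ∀ N ≥ N₀,
      ℙ {ω : Ω |
          ε * N ≤
            ((symMat x ω N - truncMat x 1 (B * aN (x 1 1) N) ω N).rank : ℝ)}
        ≤ ENNReal.ofReal (Real.exp (-δ * N)) := by
  classical
  obtain ⟨hα0, hα2⟩ := hα
  intro ε hε
  set e1 : ℝ := Real.exp 1 with he1
  have he1pos : 0 < e1 := Real.exp_pos 1
  set v : Ω → ℝ := x 1 1 with hv
  have htanti : ∀ {u w : ℝ}, u ≤ w → tailP v w ≤ tailP v u := by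
    intro u w huw
    apply ENNReal.toReal_mono (measure_ne_top _ _)
    exact measure_mono (fun ω hω => le_trans huw hω)
  have htnonneg : ∀ u : ℝ, 0 ≤ tailP v u := fun u => ENNReal.toReal_nonneg
  -- for each N ≥ 1 the defining set of aN is nonempty
  have hsetne : ∀ N : ℕ, 1 ≤ N → ∃ u : ℝ, 0 < u ∧ tailP v u ≤ 1 / N := by
    intro N hN
    have hN0 : (0:ℝ) < 1 / N := by positivity
    set A : ℕ → Set Ω := fun k => {ω | ((k:ℝ)+1) ≤ |v ω|} with hA
    have hAm : ∀ k, MeasurableSet (A k) := fun k =>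
      measurableSet_le measurable_const (hmeas 1 1).abs
    have hanti : Antitone A := by
      intro k l hkl ω hω
      have : ((k:ℝ)+1) ≤ (l:ℝ)+1 := by exact_mod_cast by omega
      exact le_trans this hω
    have hempty : ⋂ k, A k = ∅ := by
      ext ω
      simp only [Set.mem_iInter, Set.mem_empty_iff_false, iff_false, not_forall]
      obtain ⟨k, hk⟩ := exists_nat_gt (|v ω|)
      exact ⟨k, by simp [hA]; linarith⟩
    have htend := tendsto_measure_iInter_atTop (μ := ℙ)
        (fun k => (hAm k).nullMeasurableSet) hanti ⟨0, measure_ne_top _ _⟩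
    rw [hempty, measure_empty] at htend
    have hev := htend.eventually_lt_const (show (0:ℝ≥0∞) < ENNReal.ofReal (1/N) from
      ENNReal.ofReal_pos.mpr hN0)
    obtain ⟨k, hk⟩ := hev.exists
    refine ⟨(k:ℝ)+1, by positivity, ?_⟩
    exact ENNReal.toReal_le_of_le_ofReal hN0.le hk.le
  have haN_upper : ∀ N : ℕ, 1 ≤ N → ∀ u : ℝ, aN v N < u → tailP v u ≤ 1 / N := by
    intro N hN u hu
    obtain ⟨w, hw⟩ := hsetne N hN
    obtain ⟨w', hw', hw'u⟩ := (csInf_lt_iff ⟨0, fun z hz => hz.1.le⟩ ⟨w, hw⟩).mp hu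
    exact le_trans (htanti hw'u.le) hw'.2
  -- eventual positivity of the tail
  have hLpos : ∀ᶠ t in atTop, 0 < tailP v t := by
    have h1 := (hL 1 one_pos).eventually_const_lt (show (1:ℝ)/2 < 1 by norm_num)
    filter_upwards [h1, eventually_gt_atTop (0:ℝ)] with t ht ht0
    have hLt : L t ≠ 0 := by
      intro h
      rw [one_mul, h, div_zero] at ht
      norm_num at ht
    have hte := htail t ht0
    have hta : t ^ α ≠ 0 := (Real.rpow_pos_of_pos ht0 α).ne'
    have hne : tailP v t ≠ 0 := by
      rw [hv, hte]
      exact div_ne_zero hLt hta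
    exact lt_of_le_of_ne (htnonneg t) (Ne.symm hne)
  -- choice of B₀
  refine ⟨2 * max 1 ((4 * e1 ^ 2 / ε) ^ (α⁻¹)), ?_⟩
  intro B hB
  set B' : ℝ := B / 2 with hB'
  have hB'1 : 1 < B' := by
    have := le_max_left 1 ((4 * e1 ^ 2 / ε) ^ (α⁻¹))
    rw [hB']
    nlinarith [hB]
  have hB'0 : 0 < B' := lt_trans one_pos hB'1
  have hBpow : 4 * e1 ^ 2 / ε < B' ^ α := by
    have hq0 : (0:ℝ) < 4 * e1 ^ 2 / ε := by positivity
    have h1 : (4 * e1 ^ 2 / ε) ^ (α⁻¹) < B' := by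
      have := le_max_right 1 ((4 * e1 ^ 2 / ε) ^ (α⁻¹))
      rw [hB']
      nlinarith [hB]
    have h2 := Real.rpow_lt_rpow (Real.rpow_nonneg hq0.le _) h1 hα0
    rwa [← Real.rpow_mul hq0.le, inv_mul_cancel₀ hα0.ne', Real.rpow_one] at h2
  set cB : ℝ := 2 * (B' ^ α)⁻¹ with hcB
  have hBα0 : 0 < B' ^ α := Real.rpow_pos_of_pos hB'0 α
  have hcB0 : 0 < cB := by positivity
  have hcBsmall : cB < ε / (2 * e1 ^ 2) := by
    rw [hcB]
    have h4 : 4 * e1 ^ 2 < B' ^ α * ε := (div_lt_iff₀ hε).mp hBpow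
    rw [show (2:ℝ) * (B' ^ α)⁻¹ = 2 / B' ^ α by rw [div_eq_mul_inv],
      div_lt_div_iff₀ hBα0 (by positivity)]
    nlinarith
  -- eventual tail ratio bound
  have hratio : ∀ᶠ t in atTop, 0 < tailP v t ∧ tailP v (B' * t) ≤ cB * tailP v t := by
    have hcBgt : (B' ^ α)⁻¹ < cB := by
      rw [hcB]
      nlinarith [inv_pos.mpr hBα0]
    have heq : ∀ᶠ t in atTop,
        tailP v (B' * t) / tailP v t = L (B' * t) / L t * (B' ^ α)⁻¹ := by
      filter_upwards [eventually_gt_atTop (0:ℝ)] with t ht0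
      rw [hv, htail t ht0, htail (B' * t) (by positivity)]
      have h1 : (B' * t) ^ α = B' ^ α * t ^ α := Real.mul_rpow hB'0.le ht0.le
      have h2 : (t:ℝ) ^ α ≠ 0 := (Real.rpow_pos_of_pos ht0 α).ne'
      rw [h1, div_div_div_comm, mul_div_assoc, div_self h2, mul_one, div_eq_mul_inv]
    have hlim : Tendsto (fun t => tailP v (B' * t) / tailP v t) atTop (𝓝 ((B' ^ α)⁻¹)) := by
      have h := (hL B' hB'0).mul_const ((B' ^ α)⁻¹)
      rw [one_mul] at h
      exact h.congr' (heq.mono fun t ht => ht.symm)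
    filter_upwards [hlim.eventually_lt_const hcBgt, hLpos] with t h1 h2
    exact ⟨h2, ((div_lt_iff₀ h2).mp h1).le⟩
  obtain ⟨T₀, hT₀⟩ := (hratio.and (eventually_ge_atTop (1:ℝ))).exists_forall_of_atTop
  set p₀ : ℝ := tailP v T₀ with hp₀def
  have hp₀ : 0 < p₀ := (hT₀ T₀ le_rfl).1.1
  obtain ⟨N₁, hN₁⟩ := exists_nat_gt (1/p₀)
  refine ⟨ε/2, by positivity, max N₁ 1, ?_⟩
  intro N hN
  have hN1 : 1 ≤ N := le_trans (le_max_right _ _) hN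
  have hNr : (1:ℝ) ≤ N := by exact_mod_cast hN1
  have hN0 : (0:ℝ) < N := by linarith
  have hinvN : 1/(N:ℝ) < p₀ := by
    have h1 : (N₁:ℝ) ≤ N := by exact_mod_cast le_trans (le_max_left _ _) hN
    have h2 : 1/p₀ < (N:ℝ) := lt_of_lt_of_le hN₁ h1
    have h3 : 1 < (N:ℝ) * p₀ := by
      rw [div_lt_iff₀ hp₀] at h2
      linarith
    rw [div_lt_iff₀ hN0]
    linarith
  have haT : T₀ ≤ aN v N := by
    obtain ⟨u₀, hu₀⟩ := hsetne N hN1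
    apply le_csInf ⟨u₀, hu₀⟩
    rintro u ⟨hu1, hu2⟩
    by_contra hcon
    push_neg at hcon
    have := htanti hcon.le
    rw [← hp₀def] at this
    linarith
  set a : ℝ := aN v N with ha
  have ha1 : 1 ≤ a := le_trans (hT₀ T₀ le_rfl).2 haT
  have ha0 : 0 < a := lt_of_lt_of_le one_pos ha1
  set c : ℝ := B * a with hcdef
  have htc : tailP v c ≤ cB / N := by
    have h2a : tailP v (2*a) ≤ 1/N := haN_upper N hN1 (2*a) (by linarith)
    have ht2a : T₀ ≤ 2*a := by linarith
    have h3 := (hT₀ (2*a) ht2a).1.2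
    have hBc : B' * (2*a) = c := by rw [hB', hcdef]; ring
    rw [hBc] at h3
    calc tailP v c ≤ cB * (1/N) := le_trans h3 (mul_le_mul_of_nonneg_left h2a hcB0.le)
      _ = cB / N := by ring
  have hq : ℙ {ω | c < |v ω|} ≤ ENNReal.ofReal (cB / N) := by
    calc ℙ {ω | c < |v ω|} ≤ ℙ {ω | c ≤ |v ω|} := measure_mono (fun ω hω => show c ≤ |v ω| from le_of_lt (show c < |v ω| from hω))
      _ = ENNReal.ofReal (tailP v c) := (ENNReal.ofReal_toReal (measure_ne_top _ _)).symm
      _ ≤ _ := ENNReal.ofReal_le_ofReal htc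
  set m : ℕ := ⌈ε * N / 2⌉₊ with hm
  set F : Finset (ℕ × ℕ) := (Finset.Icc 1 N ×ˢ Finset.Icc 1 N).filter (fun p => p.1 ≤ p.2)
    with hF
  set Sreal : Set ℝ := {t : ℝ | c < |t|} with hSr
  have hSm : MeasurableSet Sreal := by
    have hSeq : Sreal = (fun t : ℝ => |t|) ⁻¹' Set.Ioi c := rfl
    rw [hSeq]
    exact measurable_abs measurableSet_Ioi
  set E : ℕ × ℕ → Set Ω := fun p => x p.1 p.2 ⁻¹' Sreal with hE
  have step1 : {ω : Ω | ε * N ≤ ((symMat x ω N - truncMat x 1 c ω N).rank : ℝ)}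
      ⊆ {ω : Ω | m ≤ (F.filter (fun p => ω ∈ E p)).card} := by
    intro ω hω
    simp only [Set.mem_setOf_eq] at hω ⊢
    have hkey : ∀ i j : Fin N, (symMat x ω N - truncMat x 1 c ω N) i j ≠ 0 →
        (min (i.1+1) (j.1+1), max (i.1+1) (j.1+1)) ∈ F.filter (fun p => ω ∈ E p) := by
      intro i j hne
      rw [Finset.mem_filter]
      simp only [Matrix.sub_apply, symMat, truncMat, Matrix.of_apply, inv_one, one_mul] at hne
      by_cases hle : |x (min (i.1+1) (j.1+1)) (max (i.1+1) (j.1+1)) ω| ≤ c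
      · rw [if_pos hle, sub_self] at hne; exact absurd rfl hne
      · push_neg at hle
        constructor
        · rw [hF, Finset.mem_filter, Finset.mem_product, Finset.mem_Icc, Finset.mem_Icc]
          have hi := i.2; have hj := j.2
          omega
        · simp only [hE, Set.mem_preimage, hSr, Set.mem_setOf_eq]
          exact hle
    have hrk := rank_le_two_mul_card _ _ hkey
    have h1 : ε * N ≤ 2 * ((F.filter (fun p => ω ∈ E p)).card : ℝ) := by
      refine le_trans hω ?_
      exact_mod_cast hrk
    rw [hm]
    apply Nat.ceil_le.mpr
    linarith
  have step2 : {ω : Ω | m ≤ (F.filter (fun p => ω ∈ E p)).card}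
      ⊆ ⋃ T ∈ F.powersetCard m, ⋂ p ∈ T, E p := by
    intro ω hω
    simp only [Set.mem_setOf_eq] at hω
    obtain ⟨T, hTsub, hTcard⟩ := Finset.exists_subset_card_eq hω
    refine Set.mem_iUnion₂.mpr ⟨T, Finset.mem_powersetCard.mpr
      ⟨hTsub.trans (Finset.filter_subset _ _), hTcard⟩, ?_⟩
    exact Set.mem_iInter₂.mpr fun p hp => (Finset.mem_filter.mp (hTsub hp)).2
  have step3 : ∀ T ∈ F.powersetCard m, ℙ (⋂ p ∈ T, E p) ≤ ENNReal.ofReal (cB / N) ^ m := by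
    intro T hT
    obtain ⟨hTsub, hTcard⟩ := Finset.mem_powersetCard.mp hT
    have hprop : ∀ p ∈ T, 1 ≤ p.1 ∧ p.1 ≤ p.2 := by
      intro p hp
      have hmem := hTsub hp
      rw [hF, Finset.mem_filter, Finset.mem_product, Finset.mem_Icc, Finset.mem_Icc] at hmem
      exact ⟨hmem.1.1.1, hmem.2⟩
    set T' : Finset {p : ℕ × ℕ // 1 ≤ p.1 ∧ p.1 ≤ p.2} := T.subtype _ with hT'
    have hT'card : T'.card = m := by
      rw [hT', Finset.card_subtype, Finset.filter_true_of_mem hprop, hTcard]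
    have hset : (⋂ p ∈ T, E p) = ⋂ q ∈ T', E q.1 := by
      ext ω
      simp only [Set.mem_iInter, hT', Finset.mem_subtype]
      constructor
      · intro h q hq; exact h q.1 hq
      · intro h p hp; exact h ⟨p, hprop p hp⟩ hp
    rw [hset, hindep.meas_biInter (fun q _ => ⟨Sreal, hSm, rfl⟩)]
    have hfac : ∀ q ∈ T', ℙ (E q.1) ≤ ENNReal.ofReal (cB / N) := by
      intro q _
      have h1 : ℙ (E q.1) = ℙ {ω | c < |v ω|} := by
        calc ℙ (E q.1) = (Measure.map (x q.1.1 q.1.2) ℙ) Sreal :=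
              (Measure.map_apply (hmeas _ _) hSm).symm
          _ = (Measure.map (x 1 1) ℙ) Sreal := by rw [hident q.1.1 q.1.2 q.2.1 q.2.2]
          _ = ℙ (x 1 1 ⁻¹' Sreal) := Measure.map_apply (hmeas 1 1) hSm
          _ = ℙ {ω | c < |v ω|} := rfl
      rw [h1]; exact hq
    calc (∏ q ∈ T', ℙ (E q.1)) ≤ ∏ _q ∈ T', ENNReal.ofReal (cB / N) :=
          Finset.prod_le_prod' hfac
      _ = ENNReal.ofReal (cB / N) ^ m := by rw [Finset.prod_const, hT'card]
  -- numeric inequality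
  have hm1 : 1 ≤ m := Nat.ceil_pos.mpr (by positivity)
  have hmr : ε * N / 2 ≤ (m:ℝ) := Nat.le_ceil _
  have hm0 : (0:ℝ) < m := by
    have : (1:ℝ) ≤ (m:ℝ) := by exact_mod_cast hm1
    linarith
  have hn2 : (F.card : ℝ) ≤ (N:ℝ)^2 := by
    have h1 : F.card ≤ N * N := by
      rw [hF]
      calc (Finset.filter _ _).card ≤ (Finset.Icc 1 N ×ˢ Finset.Icc 1 N).card :=
            Finset.card_filter_le _ _
        _ = N * N := by simp [Nat.card_Icc]
    calc (F.card:ℝ) ≤ ((N*N : ℕ):ℝ) := by exact_mod_cast h1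
      _ = (N:ℝ)^2 := by push_cast; ring
  have hfpos : (0:ℝ) < m.factorial := by exact_mod_cast m.factorial_pos
  have hdiv0 : (0:ℝ) ≤ cB/N := by positivity
  have hreal : (F.card.choose m : ℝ) * (cB/N)^m ≤ Real.exp (-(ε/2) * N) := by
    have hchoose : (F.card.choose m : ℝ) ≤ (F.card:ℝ)^m / m.factorial := by
      rw [le_div_iff₀ hfpos]
      have hd := Nat.descFactorial_le_pow F.card m
      rw [Nat.descFactorial_eq_factorial_mul_choose] at hd
      calc (F.card.choose m : ℝ) * m.factorial
          = ((m.factorial * F.card.choose m : ℕ) : ℝ) := by push_cast; ring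
        _ ≤ ((F.card ^ m : ℕ) : ℝ) := by exact_mod_cast hd
        _ = (F.card:ℝ)^m := by push_cast; ring
    have hbase1 : (F.card:ℝ) * (cB/N) ≤ N * cB := by
      calc (F.card:ℝ)*(cB/N) ≤ (N:ℝ)^2 * (cB/N) := mul_le_mul_of_nonneg_right hn2 hdiv0
        _ = N * cB := by field_simp
    have hbase2 : (N:ℝ) * cB * e1 / m ≤ 1/e1 := by
      rw [div_le_div_iff₀ hm0 he1pos]
      have hcB2 : cB * (2*e1^2) < ε := by
        rw [← lt_div_iff₀ (by positivity)]
        exact hcBsmall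
      have hstep := mul_lt_mul_of_pos_left hcB2 (show (0:ℝ) < N/2 by positivity)
      have hring : N/2*(cB*(2*e1^2)) = N*cB*e1*e1 := by ring
      rw [hring] at hstep
      nlinarith
    have hmm : (m:ℝ)^m ≤ e1^m * m.factorial := by
      rw [he1, Real.exp_one_pow]
      exact pow_le_exp_mul_factorial m
    have hinvfac : ((m.factorial:ℝ))⁻¹ ≤ e1^m/(m:ℝ)^m := by
      rw [inv_eq_one_div, div_le_div_iff₀ hfpos (by positivity)]
      linarith
    calc (F.card.choose m : ℝ) * (cB/N)^m
        ≤ ((F.card:ℝ)^m / m.factorial) * (cB/N)^m :=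
          mul_le_mul_of_nonneg_right hchoose (by positivity)
      _ = ((F.card:ℝ)*(cB/N))^m * ((m.factorial:ℝ))⁻¹ := by rw [mul_pow]; ring
      _ ≤ ((N:ℝ)*cB)^m * ((m.factorial:ℝ))⁻¹ := by
          apply mul_le_mul_of_nonneg_right _ (by positivity)
          exact pow_le_pow_left₀ (by positivity) hbase1 m
      _ ≤ ((N:ℝ)*cB)^m * (e1^m/(m:ℝ)^m) := by
          apply mul_le_mul_of_nonneg_left hinvfac (by positivity)
      _ = ((N:ℝ)*cB*e1/m)^m := by rw [div_pow, mul_pow, mul_pow]; ring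
      _ ≤ (1/e1)^m := pow_le_pow_left₀ (by positivity) hbase2 m
      _ = Real.exp (-(m:ℝ)) := by
          rw [one_div, he1, ← Real.exp_neg, ← Real.exp_nat_mul]
          norm_num
      _ ≤ Real.exp (-(ε/2) * N) := Real.exp_le_exp.mpr (by linarith)
  calc ℙ {ω : Ω | ε * N ≤ ((symMat x ω N - truncMat x 1 c ω N).rank : ℝ)}
      ≤ ℙ (⋃ T ∈ F.powersetCard m, ⋂ p ∈ T, E p) := measure_mono (step1.trans step2)
    _ ≤ ∑ T ∈ F.powersetCard m, ℙ (⋂ p ∈ T, E p) := measure_biUnion_finset_le _ _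
    _ ≤ ∑ _T ∈ F.powersetCard m, ENNReal.ofReal (cB/N) ^ m := Finset.sum_le_sum step3
    _ = (F.powersetCard m).card • ENNReal.ofReal (cB/N) ^ m := by rw [Finset.sum_const]
    _ = (F.card.choose m : ℝ≥0∞) * ENNReal.ofReal (cB/N) ^ m := by
        rw [Finset.card_powersetCard, nsmul_eq_mul]
    _ ≤ ENNReal.ofReal (Real.exp (-(ε/2) * N)) := by
        rw [← ENNReal.ofReal_pow hdiv0, ← ENNReal.ofReal_natCast (F.card.choose m),
          ← ENNReal.ofReal_mul (by positivity)]
        exact ENNReal.ofReal_le_ofReal hreal
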